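/- Let n ≥ 2, let D ⊆ ℝⁿ be an open connected set with μ_D(a,b) > 0 for every pair of distinct points a,b ∈ D, and let x,y ∈ D with x ≠ y. Then the infimum of cap(D, l) over all Jordan arcs l joining x to y in D (i.e., over all sets l = p([0,1]) where p : [0,1] → D is a continuous injective map with p(0) = x and p(1) = y) is equal to μ_D(x,y), the infimum of cap(D, γ) over all compact connected sets γ ⊆ D containing both x and y. -/

import Mathlib

open Set

section Arc
variable {E : Type*} [NormedAddCommGroup E] [NormedSpace ℝ E]

/-- An injective path (arc) from `x` to `z` inside `U`. -/
def MyIsArc (U : Set E) (x z : E) : Prop :=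
  ∃ p : ℝ → E, Continuous p ∧ Set.InjOn p (Set.Icc 0 1) ∧
    p 0 = x ∧ p 1 = z ∧ p '' Set.Icc 0 1 ⊆ U

lemma myIsArc_segment {U : Set E} {x z : E} (hz : z ≠ x)
    (hseg : segment ℝ x z ⊆ U) : MyIsArc U x z := by
  refine ⟨fun t => x + (min (max t 0) 1) • (z - x),
    continuous_const.add (((continuous_id.max continuous_const).min continuous_const).smul
      continuous_const), ?_, ?_, ?_, ?_⟩
  · intro t₁ h₁ t₂ h₂ h
    beta_reduce at h
    have e₁ : min (max t₁ 0) 1 = t₁ := by rw [max_eq_left h₁.1, min_eq_left h₁.2]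
    have e₂ : min (max t₂ 0) 1 = t₂ := by rw [max_eq_left h₂.1, min_eq_left h₂.2]
    rw [e₁, e₂] at h
    have hd : z - x ≠ 0 := sub_ne_zero.2 hz
    have h1 := add_left_cancel h
    have h2 : (t₁ - t₂) • (z - x) = 0 := by rw [sub_smul, h1, sub_self]
    rcases smul_eq_zero.1 h2 with h3 | h3
    · linarith [sub_eq_zero.1 h3]
    · exact absurd h3 hd
  · simp
  · norm_num
  · rintro v ⟨t, ht, hv⟩
    apply hseg
    rw [segment_eq_image' ℝ x z]
    exact ⟨min (max t 0) 1, ⟨le_min (le_max_right _ _) zero_le_one, min_le_right _ _⟩, hv⟩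

lemma myIsArc_step {U : Set E} {x w z : E} (hw : w = x ∨ MyIsArc U x w)
    (hseg : segment ℝ z w ⊆ U) (hz : z ≠ x) : MyIsArc U x z := by
  rcases hw with rfl | ⟨p, hpc, hpi, hp0, hp1, hpU⟩
  · exact myIsArc_segment hz (by rwa [segment_symm])
  · set seg := segment ℝ z w with hsegdef
    have hsegcl : IsClosed seg := by
      have hcpt : IsCompact seg := by
        rw [hsegdef, segment_eq_image' ℝ z w]
        exact isCompact_Icc.image ((by continuity : Continuous fun θ : ℝ => z + θ • (w - z)))
      exact hcpt.isClosed
    set S := {s : ℝ | s ∈ Icc (0:ℝ) 1 ∧ p s ∈ seg} with hSdef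
    have hS1 : (1:ℝ) ∈ S := ⟨⟨zero_le_one, le_refl 1⟩, by rw [hp1]; exact right_mem_segment ℝ z w⟩
    have hScl : IsClosed S := by
      have hSeq : S = Icc 0 1 ∩ p ⁻¹' seg := by ext s; simp [hSdef, mem_inter_iff]
      rw [hSeq]
      exact isClosed_Icc.inter (hsegcl.preimage hpc)
    have hbdd : BddBelow S := ⟨0, fun s hs => hs.1.1⟩
    set s₀ := sInf S with hs₀def
    have hs₀S : s₀ ∈ S := hScl.csInf_mem ⟨1, hS1⟩ hbdd
    have hmin : ∀ s ∈ Icc (0:ℝ) 1, p s ∈ seg → s₀ ≤ s := fun s h1 h2 => csInf_le hbdd ⟨h1, h2⟩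
    set q₀ := p s₀ with hq₀def
    have hq₀seg : q₀ ∈ seg := hs₀S.2
    have hs₀mem : s₀ ∈ Icc (0:ℝ) 1 := hs₀S.1
    by_cases hq0 : q₀ = z
    · -- truncation
      have hs₀ne : s₀ ≠ 0 := by
        intro h; apply hz; rw [← hq0, hq₀def, h, hp0]
      refine ⟨fun t => p (min (max (s₀ * t) 0) s₀),
        hpc.comp (((continuous_const.mul continuous_id).max continuous_const).min
          continuous_const), ?_, ?_, ?_, ?_⟩
      · intro t₁ h₁ t₂ h₂ h
        beta_reduce at h
        have e : ∀ t ∈ Icc (0:ℝ) 1, min (max (s₀ * t) 0) s₀ = s₀ * t := by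
          intro t ht
          rw [max_eq_left (mul_nonneg hs₀mem.1 ht.1),
            min_eq_left (by nlinarith [ht.2, hs₀mem.1] : s₀ * t ≤ s₀)]
        rw [e t₁ h₁, e t₂ h₂] at h
        have mem : ∀ t ∈ Icc (0:ℝ) 1, s₀ * t ∈ Icc (0:ℝ) 1 := by
          intro t ht
          exact ⟨mul_nonneg hs₀mem.1 ht.1, by nlinarith [ht.2, hs₀mem.1, hs₀mem.2]⟩
        exact mul_left_cancel₀ hs₀ne (hpi (mem t₁ h₁) (mem t₂ h₂) h)
      · show p (min (max (s₀ * 0) 0) s₀) = x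
        rw [mul_zero, max_self, min_eq_left hs₀mem.1, hp0]
      · show p (min (max (s₀ * 1) 0) s₀) = z
        rw [mul_one, max_eq_left hs₀mem.1, min_self, ← hq₀def, hq0]
      · rintro v ⟨t, ht, hv⟩
        apply hpU
        refine ⟨min (max (s₀ * t) 0) s₀, ?_, hv⟩
        exact ⟨le_min (le_max_right _ _) hs₀mem.1, le_trans (min_le_right _ _) hs₀mem.2⟩
    · -- q₀ ≠ z
      by_cases hs0 : s₀ = 0
      · -- q₀ = x, use straight segment from x to z
        have hq₀x : q₀ = x := by rw [hq₀def, hs0, hp0]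
        apply myIsArc_segment hz
        have hsub : segment ℝ x z ⊆ seg := by
          have h2 := (convex_segment z w).segment_subset hq₀seg (left_mem_segment ℝ z w)
          rwa [hq₀x] at h2
        exact hsub.trans hseg
      · have hd : z - q₀ ≠ 0 := sub_ne_zero.2 (Ne.symm hq0)
        -- concatenated path
        have clamp_eq : ∀ t : ℝ, 0 ≤ t → t ≤ 1/2 → min (max (2 * s₀ * t) 0) s₀ = 2 * s₀ * t := by
          intro t h0 h12
          have hs₀0 : 0 ≤ s₀ := hs₀mem.1
          rw [max_eq_left (by positivity), min_eq_left (by nlinarith)]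
        have hqc : Continuous fun t : ℝ =>
            if t ≤ 1/2 then p (min (max (2 * s₀ * t) 0) s₀)
            else q₀ + (2 * t - 1) • (z - q₀) := by
          apply continuous_if_le (f := fun t : ℝ => t) (g := fun _ : ℝ => (1/2:ℝ))
            continuous_id continuous_const
          · exact (hpc.comp (((continuous_const.mul continuous_id).max continuous_const).min
              continuous_const)).continuousOn
          · exact (continuous_const.add (((continuous_const.mul continuous_id).sub
              continuous_const).smul continuous_const)).continuousOn
          · intro t ht
            beta_reduce at ht
            rw [ht]
            have h1 : min (max (2 * s₀ * (1/2 : ℝ)) 0) s₀ = s₀ := by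
              rw [(by ring : 2 * s₀ * (1/2 : ℝ) = s₀), max_eq_left hs₀mem.1, min_self]
            rw [h1]
            norm_num
            exact hq₀def.symm
        have hseg_sub : segment ℝ q₀ z ⊆ seg :=
          (convex_segment z w).segment_subset hq₀seg (left_mem_segment ℝ z w)
        have hmem2 : ∀ t : ℝ, t ∈ Icc (0:ℝ) 1 → ¬(t ≤ 1/2) →
            (q₀ + (2 * t - 1) • (z - q₀)) ∈ seg ∧ q₀ + (2 * t - 1) • (z - q₀) ≠ q₀ := by
          intro t ht ht2
          have hc : 2 * t - 1 ∈ Icc (0:ℝ) 1 := ⟨by linarith [not_le.1 ht2], by linarith [ht.2]⟩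
          have hcpos : 0 < 2 * t - 1 := by linarith [not_le.1 ht2]
          constructor
          · apply hseg_sub
            rw [segment_eq_image' ℝ q₀ z]
            exact ⟨2 * t - 1, hc, rfl⟩
          · intro h
            have h2 : (2 * t - 1) • (z - q₀) = 0 := by rwa [add_eq_left] at h
            rcases smul_eq_zero.1 h2 with h3 | h3
            · linarith
            · exact hd h3
        have hmem1 : ∀ t : ℝ, t ∈ Icc (0:ℝ) 1 → t ≤ 1/2 →
            min (max (2 * s₀ * t) 0) s₀ = 2 * s₀ * t ∧ 2 * s₀ * t ∈ Icc (0:ℝ) 1 ∧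
              2 * s₀ * t ≤ s₀ := by
          intro t ht ht2
          have h2 : 2 * s₀ * t ≤ s₀ := by nlinarith [ht.1, hs₀mem.1]
          have h0 : 0 ≤ 2 * s₀ * t := by nlinarith [ht.1, hs₀mem.1]
          exact ⟨clamp_eq t ht.1 ht2, ⟨by nlinarith [ht.1, hs₀mem.1], h2.trans hs₀mem.2⟩, h2⟩
        refine ⟨fun t => if t ≤ 1/2 then p (min (max (2 * s₀ * t) 0) s₀)
          else q₀ + (2 * t - 1) • (z - q₀), hqc, ?_, ?_, ?_, ?_⟩
        · -- InjOn
          intro t₁ h₁ t₂ h₂ h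
          beta_reduce at h
          by_cases c₁ : t₁ ≤ 1/2 <;> by_cases c₂ : t₂ ≤ 1/2
          · obtain ⟨e₁, m₁, -⟩ := hmem1 t₁ h₁ c₁
            obtain ⟨e₂, m₂, -⟩ := hmem1 t₂ h₂ c₂
            rw [if_pos c₁, if_pos c₂, e₁, e₂] at h
            have h4 := hpi m₁ m₂ h
            have hs₀pos : 0 < s₀ := lt_of_le_of_ne hs₀mem.1 (Ne.symm hs0)
            nlinarith [h4]
          · obtain ⟨e₁, m₁, hle⟩ := hmem1 t₁ h₁ c₁
            obtain ⟨hin, hne⟩ := hmem2 t₂ h₂ c₂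
            exfalso
            rw [if_pos c₁, if_neg c₂, e₁] at h
            have h5 : p (2 * s₀ * t₁) ∈ seg := by rw [h]; exact hin
            have heq : 2 * s₀ * t₁ = s₀ := le_antisymm hle (hmin _ m₁ h5)
            apply hne
            rw [← h, heq, ← hq₀def]
          · obtain ⟨e₂, m₂, hle⟩ := hmem1 t₂ h₂ c₂
            obtain ⟨hin, hne⟩ := hmem2 t₁ h₁ c₁
            exfalso
            rw [if_neg c₁, if_pos c₂, e₂] at h
            have h5 : p (2 * s₀ * t₂) ∈ seg := by rw [← h]; exact hin
            have heq : 2 * s₀ * t₂ = s₀ := le_antisymm hle (hmin _ m₂ h5)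
            apply hne
            rw [h, heq, ← hq₀def]
          · rw [if_neg c₁, if_neg c₂] at h
            have h1 := add_left_cancel h
            have h2 : ((2 * t₁ - 1) - (2 * t₂ - 1)) • (z - q₀) = 0 := by
              rw [sub_smul, h1, sub_self]
            rcases smul_eq_zero.1 h2 with h3 | h3
            · linarith [sub_eq_zero.1 h3]
            · exact absurd h3 hd
        · -- value at 0
          show (if (0:ℝ) ≤ 1/2 then p (min (max (2 * s₀ * 0) 0) s₀)
            else q₀ + (2 * 0 - 1) • (z - q₀)) = x
          rw [if_pos (by norm_num : (0:ℝ) ≤ 1/2), mul_zero, max_self,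
            min_eq_left hs₀mem.1, hp0]
        · -- value at 1
          show (if (1:ℝ) ≤ 1/2 then p (min (max (2 * s₀ * 1) 0) s₀)
            else q₀ + (2 * 1 - 1) • (z - q₀)) = z
          rw [if_neg (by norm_num : ¬((1:ℝ) ≤ 1/2))]
          norm_num
        · -- image in U
          rintro v ⟨t, ht, hv⟩
          beta_reduce at hv
          by_cases ct : t ≤ 1/2
          · obtain ⟨e, m, -⟩ := hmem1 t ht ct
            rw [if_pos ct, e] at hv
            rw [← hv]
            exact hpU ⟨_, m, rfl⟩
          · obtain ⟨hin, -⟩ := hmem2 t ht ct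
            rw [if_neg ct] at hv
            rw [← hv]
            exact hseg hin

lemma myIsArc_exists {U : Set E} (hU : IsOpen U) (hconn : IsPreconnected U)
    {x y : E} (hx : x ∈ U) (hy : y ∈ U) (hxy : y ≠ x) : MyIsArc U x y := by
  classical
  set R := {z : E | z = x ∨ MyIsArc U x z} with hRdef
  have hO : IsOpen (U ∩ R) := by
    rw [Metric.isOpen_iff]
    rintro z ⟨hzU, hzR⟩
    obtain ⟨r, hr, hball⟩ := Metric.isOpen_iff.1 hU z hzU
    refine ⟨r, hr, fun w hw => ⟨hball hw, ?_⟩⟩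
    by_cases hwx : w = x
    · exact Or.inl hwx
    · refine Or.inr (myIsArc_step hzR ?_ hwx)
      exact ((convex_ball z r).segment_subset hw (Metric.mem_ball_self hr)).trans hball
  have hO' : IsOpen (U ∩ Rᶜ) := by
    rw [Metric.isOpen_iff]
    rintro z ⟨hzU, hzR⟩
    obtain ⟨r, hr, hball⟩ := Metric.isOpen_iff.1 hU z hzU
    refine ⟨r, hr, fun w hw => ⟨hball hw, ?_⟩⟩
    intro hwR
    apply hzR
    have hzx : z ≠ x := fun h => hzR (Or.inl h)
    exact Or.inr (myIsArc_step hwR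
      (((convex_ball z r).segment_subset (Metric.mem_ball_self hr) hw).trans hball) hzx)
  by_cases hyR : y ∈ R
  · rcases hyR with h | h
    · exact absurd h hxy
    · exact h
  · exfalso
    obtain ⟨v, hvU, ⟨-, hvR⟩, ⟨-, hvRc⟩⟩ :=
      hconn (U ∩ R) (U ∩ Rᶜ) hO hO'
        (fun z hz => by
          by_cases hzR : z ∈ R
          · exact Or.inl ⟨hz, hzR⟩
          · exact Or.inr ⟨hz, hzR⟩)
        ⟨x, hx, hx, Or.inl rfl⟩ ⟨y, hy, hy, hyR⟩
    exact hvRc hvR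

end Arc


open Set MeasureTheory intervalIntegral

lemma my_smooth_cutoff {ε : ℝ} (hε : 0 < ε) (hε2 : ε < 1/2) :
    ∃ φ : ℝ → ℝ, ContDiff ℝ 1 φ ∧ φ 0 = 0 ∧ (∀ t, 1 - ε ≤ t → φ t = 1) ∧
      (∀ t, |deriv φ t| ≤ (1 - 2*ε)⁻¹) ∧ (∀ t, 1 - ε ≤ t → deriv φ t = 0) := by
  set χ : ℝ → ℝ := fun s => 1 - Real.smoothTransition ((s - (1 - 2*ε))/ε) with hχdef
  have hχc : Continuous χ := by
    apply continuous_const.sub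
    exact Real.smoothTransition.continuous.comp (by continuity)
  have hχ0 : ∀ s, 0 ≤ χ s := fun s => by
    simp only [hχdef, sub_nonneg]; exact Real.smoothTransition.le_one _
  have hχ1 : ∀ s, χ s ≤ 1 := fun s => by
    simp only [hχdef]
    linarith [Real.smoothTransition.nonneg ((s - (1 - 2*ε))/ε)]
  have hχone : ∀ s, s ≤ 1 - 2*ε → χ s = 1 := by
    intro s hs
    simp only [hχdef]
    rw [Real.smoothTransition.zero_of_nonpos (div_nonpos_of_nonpos_of_nonneg (by linarith) hε.le)]
    ring
  have hχzero : ∀ s, 1 - ε ≤ s → χ s = 0 := by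
    intro s hs
    simp only [hχdef]
    rw [Real.smoothTransition.one_of_one_le ((one_le_div hε).2 (by linarith))]
    ring
  set A : ℝ := ∫ s in (0:ℝ)..(1 - ε), χ s with hAdef
  have hint : ∀ a b : ℝ, IntervalIntegrable χ volume a b := fun a b => hχc.intervalIntegrable a b
  have hA1 : 1 - 2*ε ≤ A := by
    have hsplit : (∫ s in (0:ℝ)..(1 - 2*ε), χ s) + (∫ s in (1 - 2*ε)..(1 - ε), χ s) = A :=
      integral_add_adjacent_intervals (hint _ _) (hint _ _)
    have h1 : (∫ s in (0:ℝ)..(1 - 2*ε), χ s) = 1 - 2*ε := by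
      rw [integral_congr (g := fun _ => (1:ℝ)) (fun s hs => by
        apply hχone
        rcases hs with ⟨hs1, hs2⟩
        have : (0:ℝ) ⊓ (1 - 2*ε) = 0 := min_eq_left (by linarith)
        have h2 : (0:ℝ) ⊔ (1 - 2*ε) = 1 - 2*ε := max_eq_right (by linarith)
        rw [h2] at hs2
        exact hs2)]
      simp
    have h2 : 0 ≤ ∫ s in (1 - 2*ε)..(1 - ε), χ s :=
      integral_nonneg (by linarith) (fun s _ => hχ0 s)
    linarith
  have hApos : 0 < A := lt_of_lt_of_le (by linarith) hA1
  set φ : ℝ → ℝ := fun t => (∫ s in (0:ℝ)..t, χ s) / A with hφdef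
  have hderiv : ∀ t, HasDerivAt φ (χ t / A) t := fun t =>
    ((hχc.integral_hasStrictDerivAt 0 t).hasDerivAt).div_const A
  have hderiv' : deriv φ = fun t => χ t / A := funext fun t => (hderiv t).deriv
  refine ⟨φ, ?_, ?_, ?_, ?_, ?_⟩
  · rw [contDiff_one_iff_deriv]
    exact ⟨fun t => (hderiv t).differentiableAt, by rw [hderiv']; exact hχc.div_const A⟩
  · simp [hφdef]
  · intro t ht
    have hsplit : (∫ s in (0:ℝ)..(1 - ε), χ s) + (∫ s in (1 - ε)..t, χ s) = ∫ s in (0:ℝ)..t, χ s :=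
      integral_add_adjacent_intervals (hint _ _) (hint _ _)
    have h2 : (∫ s in (1 - ε)..t, χ s) = 0 := by
      rw [integral_congr (g := fun _ => (0:ℝ)) (fun s hs => by
        apply hχzero
        rcases hs with ⟨hs1, hs2⟩
        have h3 : (1 - ε) ⊓ t = 1 - ε := min_eq_left ht
        rw [h3] at hs1
        exact hs1)]
      simp
    simp only [hφdef]
    rw [← hsplit, h2, add_zero, ← hAdef, div_self hApos.ne']
  · intro t
    rw [hderiv']
    have h1 : |χ t / A| = χ t / A := abs_of_nonneg (div_nonneg (hχ0 t) hApos.le)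
    rw [h1]
    calc χ t / A ≤ 1 / A := by
          gcongr
          exact hχ1 t
        _ ≤ (1 - 2*ε)⁻¹ := by
          rw [one_div]
          exact inv_anti₀ (by linarith) hA1
  · intro t ht
    rw [hderiv']
    beta_reduce
    rw [hχzero t ht, zero_div]


open MeasureTheory Metric Set intervalIntegral
open scoped NNReal ENNReal

/-- Conformal capacity of the condenser `(D, K)` in `ℝⁿ`:
`cap(D,K) = inf ∫_{D∖K} ‖Du‖ⁿ dm` over C¹ functions `u` with compact support in `D`
with `u ≥ 1` on `K` (with `inf ∅ = ∞`). -/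
noncomputable def conformalCap (n : ℕ) (D K : Set (EuclideanSpace ℝ (Fin n))) : ENNReal :=
  sInf { e : ENNReal | ∃ u : EuclideanSpace ℝ (Fin n) → ℝ,
    ContDiff ℝ 1 u ∧ HasCompactSupport u ∧ tsupport u ⊆ D ∧
    (∀ x ∈ K, 1 ≤ u x) ∧
    e = ∫⁻ x in D \ K, (‖fderiv ℝ u x‖₊ : ENNReal) ^ n }

/-- The modulus metric: `μ_D(x,y) = inf cap(D,γ)` over compact connected `γ ⊆ D`
containing `x` and `y`. -/
noncomputable def modMetric (n : ℕ) (D : Set (EuclideanSpace ℝ (Fin n)))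
    (x y : EuclideanSpace ℝ (Fin n)) : ENNReal :=
  sInf { e : ENNReal | ∃ γ : Set (EuclideanSpace ℝ (Fin n)),
    IsCompact γ ∧ IsConnected γ ∧ γ ⊆ D ∧ x ∈ γ ∧ y ∈ γ ∧ e = conformalCap n D γ }


theorem modMetric_eq_inf_over_jordan_arcs (n : ℕ) (hn : 2 ≤ n)
    (D : Set (EuclideanSpace ℝ (Fin n)))
    (hDopen : IsOpen D) (hDconn : IsConnected D)
    (hμD : ∀ a ∈ D, ∀ b ∈ D, a ≠ b → 0 < modMetric n D a b)
    (x y : EuclideanSpace ℝ (Fin n)) (hx : x ∈ D) (hy : y ∈ D) (hxy : x ≠ y) :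
    sInf { e : ENNReal | ∃ p : ℝ → EuclideanSpace ℝ (Fin n),
        ContinuousOn p (Set.Icc 0 1) ∧ Set.InjOn p (Set.Icc 0 1) ∧
        p 0 = x ∧ p 1 = y ∧ p '' Set.Icc 0 1 ⊆ D ∧
        e = conformalCap n D (p '' Set.Icc 0 1) }
      = modMetric n D x y := by
  apply le_antisymm
  · -- hard direction
    refine le_sInf ?_
    rintro e ⟨γ, hγcpt, hγconn, hγD, hxγ, hyγ, rfl⟩
    rw [conformalCap]
    refine le_sInf ?_
    rintro c ⟨u, huC, huS, huD, huγ, rfl⟩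
    have key : ∀ m : ℝ≥0, 1 < m →
        sInf { e : ENNReal | ∃ p : ℝ → EuclideanSpace ℝ (Fin n),
          ContinuousOn p (Set.Icc 0 1) ∧ Set.InjOn p (Set.Icc 0 1) ∧
          p 0 = x ∧ p 1 = y ∧ p '' Set.Icc 0 1 ⊆ D ∧
          e = conformalCap n D (p '' Set.Icc 0 1) }
          ≤ (m : ℝ≥0∞)^n * ∫⁻ z in D \ γ, (‖fderiv ℝ u z‖₊ : ℝ≥0∞) ^ n := by
      intro m hm
      have hm1 : (1:ℝ) < (m:ℝ) := by exact_mod_cast hm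
      have hmpos : (0:ℝ) < (m:ℝ) := lt_trans zero_lt_one hm1
      have hminv : (m:ℝ)⁻¹ < 1 := inv_lt_one_of_one_lt₀ hm1
      have hinvpos : 0 < (m:ℝ)⁻¹ := inv_pos.2 hmpos
      set ε : ℝ := (1 - (m:ℝ)⁻¹)/2 with hεdef
      have hε : 0 < ε := by rw [hεdef]; linarith
      have hε2 : ε < 1/2 := by rw [hεdef]; linarith
      have h12 : 1 - 2*ε = (m:ℝ)⁻¹ := by rw [hεdef]; ring
      obtain ⟨φ, hφC, hφ0, hφ1, hφd, hφd0⟩ := my_smooth_cutoff hε hε2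
      have hφdm : ∀ t, |deriv φ t| ≤ (m:ℝ) := by
        intro t; refine (hφd t).trans ?_; rw [h12, inv_inv]
      set v : EuclideanSpace ℝ (Fin n) → ℝ := fun z => φ (u z) with hvdef
      have hucont : Continuous u := huC.continuous
      set U : Set (EuclideanSpace ℝ (Fin n)) := u ⁻¹' Ioi (1 - ε) with hUdef
      have hUopen : IsOpen U := isOpen_Ioi.preimage hucont
      have hγU : γ ⊆ U := by
        intro z hz
        have h1 : 1 ≤ u z := huγ z hz
        show u z ∈ Ioi (1 - ε)
        rw [mem_Ioi]; linarith
      have hUD : U ⊆ D := by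
        intro z hz
        have h1 : 1 - ε < u z := hz
        apply huD
        apply subset_tsupport
        simp only [Function.mem_support]
        intro h0
        rw [h0] at h1
        linarith
      set Ω := connectedComponentIn U x with hΩdef
      have hxU : x ∈ U := hγU hxγ
      have hΩopen : IsOpen Ω := hUopen.connectedComponentIn
      have hΩconn : IsPreconnected Ω :=
        (isConnected_connectedComponentIn_iff.2 hxU).isPreconnected
      have hxΩ : x ∈ Ω := mem_connectedComponentIn hxU
      have hyΩ : y ∈ Ω :=
        (hγconn.isPreconnected.subset_connectedComponentIn hxγ hγU) hyγ
      obtain ⟨p, hpc, hpi, hp0, hp1, hpΩ⟩ := myIsArc_exists hΩopen hΩconn hxΩ hyΩ (Ne.symm hxy)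
      set l := p '' Icc (0:ℝ) 1 with hldef
      have hΩU : Ω ⊆ U := connectedComponentIn_subset U x
      have hlU : l ⊆ U := hpΩ.trans hΩU
      have hlD : l ⊆ D := hlU.trans hUD
      have hlcpt : IsCompact l := isCompact_Icc.image_of_continuousOn hpc.continuousOn
      -- properties of v
      have hvC : ContDiff ℝ 1 v := hφC.comp huC
      have hvsupp : tsupport v ⊆ tsupport u := by
        apply closure_minimal _ (isClosed_tsupport u)
        intro z hz
        by_contra h
        apply Function.mem_support.1 hz
        show φ (u z) = 0
        rw [image_eq_zero_of_notMem_tsupport h, hφ0]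
      have hvS : HasCompactSupport v :=
        IsCompact.of_isClosed_subset huS (isClosed_tsupport v) hvsupp
      have hvD : tsupport v ⊆ D := hvsupp.trans huD
      have hvl : ∀ z ∈ l, 1 ≤ v z := by
        intro z hz
        have h1 : 1 - ε < u z := hlU hz
        show (1:ℝ) ≤ φ (u z)
        rw [hφ1 (u z) h1.le]
      -- derivative bound
      have huDiff : Differentiable ℝ u := huC.differentiable one_ne_zero
      have hφDiff : Differentiable ℝ φ := hφC.differentiable one_ne_zero
      have hfd : ∀ z, HasFDerivAt v ((ContinuousLinearMap.smulRight (1 : ℝ →L[ℝ] ℝ)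
          (deriv φ (u z))).comp (fderiv ℝ u z)) z := by
        intro z
        exact (hasDerivAt_iff_hasFDerivAt.1 (hφDiff (u z)).hasDerivAt).comp z
          (huDiff z).hasFDerivAt
      have hone : ‖(1 : ℝ →L[ℝ] ℝ)‖ = 1 := by
        rw [ContinuousLinearMap.one_def, ContinuousLinearMap.norm_id]
      have hnorm : ∀ z, ‖fderiv ℝ v z‖ ≤ |deriv φ (u z)| * ‖fderiv ℝ u z‖ := by
        intro z
        rw [(hfd z).fderiv]
        refine (ContinuousLinearMap.opNorm_comp_le _ _).trans ?_
        rw [ContinuousLinearMap.norm_smulRight_apply, hone, one_mul, Real.norm_eq_abs]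
      have hmeas_l : MeasurableSet (D \ l) :=
        hDopen.measurableSet.diff hlcpt.isClosed.measurableSet
      have hmeas_γ : MeasurableSet (D \ γ) :=
        hDopen.measurableSet.diff hγcpt.isClosed.measurableSet
      have hpt : ∀ z, (D \ l).indicator (fun z => (‖fderiv ℝ v z‖₊ : ℝ≥0∞)^n) z ≤
          (D \ γ).indicator (fun z => ((m : ℝ≥0∞))^n * (‖fderiv ℝ u z‖₊ : ℝ≥0∞)^n) z := by
        intro z
        by_cases hzl : z ∈ D \ l
        · rw [indicator_of_mem hzl]
          by_cases hzU : z ∈ U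
          · have hz1 : 1 - ε ≤ u z := le_of_lt hzU
            have h0 : fderiv ℝ v z = 0 := by
              rw [(hfd z).fderiv, hφd0 _ hz1]
              ext w
              simp
            rw [h0]
            simp only [nnnorm_zero, ENNReal.coe_zero]
            rw [zero_pow (by omega : n ≠ 0)]
            exact zero_le
          · have hzγ : z ∈ D \ γ := ⟨hzl.1, fun hzg => hzU (hγU hzg)⟩
            rw [indicator_of_mem hzγ]
            have h1 : ‖fderiv ℝ v z‖ ≤ (m:ℝ) * ‖fderiv ℝ u z‖ :=
              (hnorm z).trans (mul_le_mul_of_nonneg_right (hφdm (u z)) (norm_nonneg _))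
            have h2 : (‖fderiv ℝ v z‖₊ : ℝ≥0∞) ≤ (m : ℝ≥0∞) * (‖fderiv ℝ u z‖₊ : ℝ≥0∞) := by
              rw [← ENNReal.coe_mul]
              refine ENNReal.coe_le_coe.2 ?_
              rw [← NNReal.coe_le_coe]
              push_cast
              simpa [coe_nnnorm] using h1
            calc (‖fderiv ℝ v z‖₊ : ℝ≥0∞)^n
                ≤ ((m : ℝ≥0∞) * (‖fderiv ℝ u z‖₊ : ℝ≥0∞))^n := by gcongr
              _ = (m:ℝ≥0∞)^n * (‖fderiv ℝ u z‖₊ : ℝ≥0∞)^n := mul_pow _ _ n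
        · rw [indicator_of_notMem hzl]
          exact zero_le
      have hintle : (∫⁻ z in D \ l, (‖fderiv ℝ v z‖₊ : ℝ≥0∞)^n) ≤
          (m:ℝ≥0∞)^n * ∫⁻ z in D \ γ, (‖fderiv ℝ u z‖₊ : ℝ≥0∞)^n := by
        calc ∫⁻ z in D \ l, (‖fderiv ℝ v z‖₊:ℝ≥0∞)^n
            = ∫⁻ z, (D \ l).indicator (fun z => (‖fderiv ℝ v z‖₊:ℝ≥0∞)^n) z :=
              (lintegral_indicator hmeas_l _).symm
          _ ≤ ∫⁻ z, (D \ γ).indicator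
                (fun z => (m:ℝ≥0∞)^n * (‖fderiv ℝ u z‖₊:ℝ≥0∞)^n) z := lintegral_mono hpt
          _ = ∫⁻ z in D \ γ, (m:ℝ≥0∞)^n * (‖fderiv ℝ u z‖₊:ℝ≥0∞)^n :=
              lintegral_indicator hmeas_γ _
          _ = (m:ℝ≥0∞)^n * ∫⁻ z in D \ γ, (‖fderiv ℝ u z‖₊:ℝ≥0∞)^n :=
              lintegral_const_mul' _ _ (by
                exact ENNReal.pow_ne_top ENNReal.coe_ne_top)
      have step1 : sInf { e : ENNReal | ∃ p : ℝ → EuclideanSpace ℝ (Fin n),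
          ContinuousOn p (Set.Icc 0 1) ∧ Set.InjOn p (Set.Icc 0 1) ∧
          p 0 = x ∧ p 1 = y ∧ p '' Set.Icc 0 1 ⊆ D ∧
          e = conformalCap n D (p '' Set.Icc 0 1) } ≤ conformalCap n D l :=
        sInf_le ⟨p, hpc.continuousOn, hpi, hp0, hp1, hlD, rfl⟩
      have step2 : conformalCap n D l ≤ ∫⁻ z in D \ l, (‖fderiv ℝ v z‖₊:ℝ≥0∞)^n :=
        sInf_le ⟨v, hvC, hvS, hvD, hvl, rfl⟩
      exact step1.trans (step2.trans hintle)
    have h1 : Filter.Tendsto (fun m : ℝ≥0 => ((m : ℝ≥0∞))^n *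
        ∫⁻ z in D \ γ, (‖fderiv ℝ u z‖₊ : ℝ≥0∞) ^ n) (nhdsWithin (1:ℝ≥0) (Set.Ioi 1))
        (nhds (∫⁻ z in D \ γ, (‖fderiv ℝ u z‖₊ : ℝ≥0∞) ^ n)) := by
      have t0 : Filter.Tendsto (fun m : ℝ≥0 => (m:ℝ≥0∞)) (nhds (1:ℝ≥0))
          (nhds ((1:ℝ≥0) : ℝ≥0∞)) := ENNReal.tendsto_coe.2 Filter.tendsto_id
      have t1 := ENNReal.Tendsto.pow (n := n) t0
      have t2 := ENNReal.Tendsto.mul_const (b := ∫⁻ z in D \ γ, (‖fderiv ℝ u z‖₊ : ℝ≥0∞) ^ n) t1 (Or.inl (by simp))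
      simpa using t2.mono_left nhdsWithin_le_nhds
    exact ge_of_tendsto h1 (eventually_mem_nhdsWithin.mono fun m hm => key m hm)
  · -- easy direction
    refine le_sInf ?_
    rintro e ⟨p, hpc, hpi, hp0, hp1, hpD, rfl⟩
    apply sInf_le
    exact ⟨p '' Icc 0 1, isCompact_Icc.image_of_continuousOn hpc,
      (isConnected_Icc zero_le_one).image p hpc, hpD,
      ⟨0, ⟨le_refl 0, zero_le_one⟩, hp0⟩, ⟨1, ⟨zero_le_one, le_refl 1⟩, hp1⟩, rfl⟩
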